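/- There exists a strongly separately continuous function f : ℓ∞ → [0,1] that is of Baire class 2 but not of Baire class 1 on ℓ∞: f is a pointwise limit of a sequence of functions each of which is a pointwise limit of continuous functions ℓ∞ → [0,1], but f is not a pointwise limit of any sequence of continuous functions. (The instance α = 1 of the main theorem; the indicator function of the set A₁ of eventually-zero sequences is such a function.) -/

import Mathlib

open BoundedContinuousFunction Filter
open scoped Classical

/-- `f : ℓ∞ → ℝ` is strongly separately continuous: at each point `x₀`, for each
coordinate `k` and each `ε > 0` there is `δ > 0` such that whenever `‖x - x₀‖ < δ`,
the value of `f` at `x` and at the point `z` obtained from `x` by replacing the `k`-th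
coordinate with `x₀ k` differ by less than `ε`. -/
def SSC (f : (ℕ →ᵇ ℝ) → ℝ) : Prop :=
  ∀ (x₀ : ℕ →ᵇ ℝ) (k : ℕ), ∀ ε > (0 : ℝ), ∃ δ > (0 : ℝ), ∀ x : ℕ →ᵇ ℝ, ‖x - x₀‖ < δ →
    ∀ z : ℕ →ᵇ ℝ, z k = x₀ k → (∀ j ≠ k, z j = x j) → |f x - f z| < ε

/-- `f` is a pointwise limit of continuous functions `ℓ∞ → [0,1]`. -/
def BaireOne01 (f : (ℕ →ᵇ ℝ) → ℝ) : Prop :=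
  ∃ g : ℕ → (ℕ →ᵇ ℝ) → ℝ, (∀ n, Continuous (g n)) ∧
    (∀ n x, g n x ∈ Set.Icc (0 : ℝ) 1) ∧
    ∀ x, Tendsto (fun n => g n x) atTop (nhds (f x))

/-- The predicate "x is eventually zero". -/
def EvZero (x : ℕ →ᵇ ℝ) : Prop := ∃ N, ∀ k ≥ N, x k = 0

/-- The indicator of the set of eventually-zero sequences. -/
noncomputable def fInd (x : ℕ →ᵇ ℝ) : ℝ := if EvZero x then 1 else 0

lemma fInd_mem (x : ℕ →ᵇ ℝ) : fInd x ∈ Set.Icc (0 : ℝ) 1 := by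
  unfold fInd; split <;> norm_num

lemma evZero_congr {x z : ℕ →ᵇ ℝ} {k : ℕ} (h : ∀ j ≠ k, z j = x j) :
    EvZero x ↔ EvZero z := by
  constructor
  · rintro ⟨N, hN⟩
    exact ⟨max N (k + 1), fun j hj => by
      rw [h j (by omega)]; exact hN j (le_trans (le_max_left _ _) hj)⟩
  · rintro ⟨N, hN⟩
    exact ⟨max N (k + 1), fun j hj => by
      rw [← h j (by omega)]; exact hN j (le_trans (le_max_left _ _) hj)⟩

/-- Indicator of a closed nonempty set is a pointwise limit of continuous `[0,1]`-valued
functions. -/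
lemma baireOne01_indicator {s : Set (ℕ →ᵇ ℝ)} (hs : IsClosed s) (hne : s.Nonempty) :
    BaireOne01 (fun x => if x ∈ s then 1 else 0) := by
  classical
  refine ⟨fun m x => max 0 (1 - m * Metric.infDist x s), ?_, ?_, ?_⟩
  · intro m
    exact continuous_const.max (continuous_const.sub
      (continuous_const.mul (Metric.continuous_infDist_pt s)))
  · intro m x
    constructor
    · exact le_max_left _ _
    · refine max_le (by norm_num) ?_
      have : (0 : ℝ) ≤ m * Metric.infDist x s :=
        mul_nonneg (by positivity) Metric.infDist_nonneg
      linarith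
  · intro x
    by_cases hx : x ∈ s
    · have hd : Metric.infDist x s = 0 := by
        rw [Metric.infDist_zero_of_mem hx]
      simp only [hx, if_pos]
      have heq : (fun m : ℕ => max 0 (1 - (m:ℝ) * Metric.infDist x s)) = fun _ => 1 := by
        funext m; rw [hd]; norm_num
      rw [heq]; exact tendsto_const_nhds
    · have hd : 0 < Metric.infDist x s := (hs.notMem_iff_infDist_pos hne).mp hx
      simp only [hx, if_neg, if_false]
      have : (fun m : ℕ => max 0 (1 - (m:ℝ) * Metric.infDist x s)) =ᶠ[atTop] fun _ => (0:ℝ) := by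
        filter_upwards [eventually_ge_atTop ⌈(Metric.infDist x s)⁻¹⌉₊] with m hm
        have h1 : (Metric.infDist x s)⁻¹ ≤ (m : ℝ) :=
          le_trans (Nat.le_ceil _) (by exact_mod_cast hm)
        have h2 : (1 : ℝ) ≤ m * Metric.infDist x s := by
          rw [← inv_mul_cancel₀ (ne_of_gt hd)]
          exact mul_le_mul_of_nonneg_right h1 (le_of_lt hd)
        exact max_eq_left (by linarith)
      exact Tendsto.congr' this.symm tendsto_const_nhds

/-- `Cn n` : sequences vanishing from index `n` on. -/
def Cn (n : ℕ) : Set (ℕ →ᵇ ℝ) := {x | ∀ j ≥ n, x j = 0}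

lemma isClosed_Cn (n : ℕ) : IsClosed (Cn n) := by
  have : Cn n = ⋂ j, ⋂ (_ : j ≥ n), (fun x : ℕ →ᵇ ℝ => x j) ⁻¹' {0} := by
    ext x; simp [Cn]
  rw [this]
  exact isClosed_iInter fun j => isClosed_iInter fun _ =>
    IsClosed.preimage (continuous_eval_const _) isClosed_singleton

lemma Cn_nonempty (n : ℕ) : (Cn n).Nonempty := ⟨0, fun j _ => rfl⟩

/-- The compact "Cantor-like" set `S`. -/
def SCant : Set (ℕ →ᵇ ℝ) := {x | ∀ k, x k = 0 ∨ x k = (2 : ℝ)⁻¹ ^ k}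

lemma isClosed_SCant : IsClosed SCant := by
  have : SCant = ⋂ k, (fun x : ℕ →ᵇ ℝ => x k) ⁻¹' ({0, (2 : ℝ)⁻¹ ^ k}) := by
    ext x; simp [SCant, Set.mem_iInter]
  rw [this]
  exact isClosed_iInter fun k =>
    IsClosed.preimage (continuous_eval_const _)
      (Set.Finite.isClosed ((Set.finite_singleton _).insert _))

theorem exists_ssc_baire_two_not_baire_one :
    ∃ f : (ℕ →ᵇ ℝ) → ℝ,
      (∀ x, f x ∈ Set.Icc (0 : ℝ) 1) ∧
      SSC f ∧
      (∃ g : ℕ → (ℕ →ᵇ ℝ) → ℝ, (∀ n, BaireOne01 (g n)) ∧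
        ∀ x, Tendsto (fun n => g n x) atTop (nhds (f x))) ∧
      ¬ (∃ g : ℕ → (ℕ →ᵇ ℝ) → ℝ, (∀ n, Continuous (g n)) ∧
        ∀ x, Tendsto (fun n => g n x) atTop (nhds (f x))) := by
  classical
  refine ⟨fInd, fInd_mem, ?_, ?_, ?_⟩
  · -- SSC
    intro x₀ k ε hε
    refine ⟨1, by norm_num, fun x _ z hzk hz => ?_⟩
    have : fInd x = fInd z := by
      unfold fInd
      by_cases h : EvZero x
      · rw [if_pos h, if_pos ((evZero_congr hz).mp h)]
      · rw [if_neg h, if_neg (fun hh => h ((evZero_congr hz).mpr hh))]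
    rw [this]; simpa using hε
  · -- Baire two
    refine ⟨fun n x => if x ∈ Cn n then 1 else 0,
      fun n => baireOne01_indicator (isClosed_Cn n) (Cn_nonempty n), ?_⟩
    intro x
    by_cases hx : EvZero x
    · obtain ⟨N, hN⟩ := hx
      have hf : fInd x = 1 := if_pos ⟨N, hN⟩
      rw [hf]
      have : (fun n : ℕ => if x ∈ Cn n then (1:ℝ) else 0) =ᶠ[atTop] fun _ => (1:ℝ) := by
        filter_upwards [eventually_ge_atTop N] with n hn
        exact if_pos (fun j hj => hN j (le_trans hn hj))
      exact Tendsto.congr' this.symm tendsto_const_nhds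
    · have hf : fInd x = 0 := if_neg hx
      rw [hf]
      have : ∀ n : ℕ, (if x ∈ Cn n then (1:ℝ) else 0) = 0 := by
        intro n
        exact if_neg (fun h => hx ⟨n, h⟩)
      exact tendsto_const_nhds.congr (fun n => (this n).symm)
  · -- Not Baire one
    rintro ⟨g, hgc, hgl⟩
    -- Work in the subtype S
    have hcs : CompleteSpace SCant := isClosed_SCant.completeSpace_coe
    have hne : Nonempty SCant := ⟨⟨0, fun k => Or.inl rfl⟩⟩
    have hbaire : BaireSpace SCant := by haveI := hcs; infer_instance
    set E : ℕ → Set SCant := fun N =>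
      {x | ∀ m ≥ N, ∀ n ≥ N, |g m x.1 - g n x.1| ≤ 1/5} with hE
    have hEclosed : ∀ N, IsClosed (E N) := by
      intro N
      have : E N = ⋂ m, ⋂ (_ : m ≥ N), ⋂ n, ⋂ (_ : n ≥ N),
          (fun x : SCant => |g m x.1 - g n x.1|) ⁻¹' (Set.Iic (1/5)) := by
        ext x; simp [hE, Set.mem_iInter]
      rw [this]
      refine isClosed_iInter fun m => isClosed_iInter fun _ =>
        isClosed_iInter fun n => isClosed_iInter fun _ => ?_
      exact IsClosed.preimage
        ((((hgc m).comp continuous_subtype_val).sub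
          ((hgc n).comp continuous_subtype_val)).abs) isClosed_Iic
    have hEcover : ⋃ N, E N = Set.univ := by
      ext x
      simp only [Set.mem_iUnion, Set.mem_univ, iff_true]
      have hc : CauchySeq (fun n => g n x.1) := (hgl x.1).cauchySeq
      obtain ⟨N, hN⟩ := Metric.cauchySeq_iff.mp hc (1/5) (by norm_num)
      exact ⟨N, fun m hm n hn => le_of_lt (by simpa [Real.dist_eq] using hN m hm n hn)⟩
    obtain ⟨N, x₀, hx₀⟩ := nonempty_interior_of_iUnion_of_closed hEclosed hEcover
    obtain ⟨r, hr, hball⟩ := Metric.isOpen_iff.mp isOpen_interior x₀ hx₀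
    have hballE : Metric.ball x₀ r ⊆ E N := hball.trans interior_subset
    -- f is within 1/5 of g N on E N
    have hfE : ∀ w : SCant, w ∈ E N → |fInd w.1 - g N w.1| ≤ 1/5 := by
      intro w hw
      have h1 : Tendsto (fun m => |g m w.1 - g N w.1|) atTop
          (nhds (|fInd w.1 - g N w.1|)) :=
        (((hgl w.1).sub tendsto_const_nhds).abs)
      refine le_of_tendsto h1 ?_
      filter_upwards [eventually_ge_atTop N] with m hm
      exact hw m hm N le_rfl
    -- continuity of g N at x₀
    obtain ⟨δ, hδ, hδc⟩ := Metric.continuous_iff.mp (hgc N) x₀.1 (1/5) (by norm_num)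
    set ρ := min δ r with hρ
    have hρpos : 0 < ρ := lt_min hδ hr
    -- choose K with 2⁻¹ ^ K < ρ
    obtain ⟨K, hK⟩ := exists_pow_lt_of_lt_one hρpos (by norm_num : (2:ℝ)⁻¹ < 1)
    -- construct y (eventually zero) and z (never eventually zero) near x₀
    have hx₀mem : x₀.1 ∈ SCant := x₀.2
    have hx₀bd : ∀ k, |x₀.1 k| ≤ 1 := by
      intro k
      rcases hx₀mem k with h | h
      · rw [h]; norm_num
      · rw [h, abs_of_nonneg (by positivity)]
        exact pow_le_one₀ (by norm_num) (by norm_num)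
    set yf : ℕ → ℝ := fun k => if k ≤ K then x₀.1 k else 0 with hyf
    set zf : ℕ → ℝ := fun k => if k ≤ K then x₀.1 k else (2:ℝ)⁻¹ ^ k with hzf
    have hybd : ∀ k, ‖yf k‖ ≤ 1 := by
      intro k; simp only [hyf, Real.norm_eq_abs]
      split
      · exact hx₀bd k
      · norm_num
    have hzbd : ∀ k, ‖zf k‖ ≤ 1 := by
      intro k; simp only [hzf, Real.norm_eq_abs]
      split
      · exact hx₀bd k
      · rw [abs_of_nonneg (by positivity)]
        exact pow_le_one₀ (by norm_num) (by norm_num)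
    set y : ℕ →ᵇ ℝ := BoundedContinuousFunction.ofNormedAddCommGroup yf
      continuous_of_discreteTopology 1 hybd with hy
    set z : ℕ →ᵇ ℝ := BoundedContinuousFunction.ofNormedAddCommGroup zf
      continuous_of_discreteTopology 1 hzbd with hz
    have hyapp : ∀ k, y k = yf k := fun k => rfl
    have hzapp : ∀ k, z k = zf k := fun k => rfl
    -- y, z ∈ SCant
    have hyS : y ∈ SCant := by
      intro k
      rw [hyapp k]; simp only [hyf]
      split
      · exact hx₀mem k
      · exact Or.inl rfl
    have hzS : z ∈ SCant := by
      intro k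
      rw [hzapp k]; simp only [hzf]
      split
      · exact hx₀mem k
      · exact Or.inr rfl
    -- distances to x₀
    have hcoorddist : ∀ (w : ℕ →ᵇ ℝ), (∀ k, k ≤ K → w k = x₀.1 k) →
        (∀ k, ¬ k ≤ K → |w k - x₀.1 k| ≤ (2:ℝ)⁻¹ ^ (K+1)) → dist w x₀.1 ≤ (2:ℝ)⁻¹ ^ (K+1) := by
      intro w h1 h2
      rw [BoundedContinuousFunction.dist_le (by positivity)]
      intro k
      by_cases hk : k ≤ K
      · rw [Real.dist_eq, h1 k hk, sub_self, abs_zero]; positivity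
      · rw [Real.dist_eq]; exact h2 k hk
    have hsmall : ∀ k, ¬ k ≤ K → |x₀.1 k| ≤ (2:ℝ)⁻¹ ^ (K+1) := by
      intro k hk
      rcases hx₀mem k with h | h
      · rw [h, abs_zero]; positivity
      · rw [h, abs_of_nonneg (by positivity)]
        exact pow_le_pow_of_le_one (by norm_num) (by norm_num) (by omega)
    have hydist : dist y x₀.1 ≤ (2:ℝ)⁻¹ ^ (K+1) := by
      refine hcoorddist y (fun k hk => by rw [hyapp k]; simp [hyf, hk]) ?_
      intro k hk
      rw [hyapp k]; simp only [hyf, if_neg hk, zero_sub, abs_neg]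
      exact hsmall k hk
    have hzdist : dist z x₀.1 ≤ (2:ℝ)⁻¹ ^ (K+1) := by
      refine hcoorddist z (fun k hk => by rw [hzapp k]; simp [hzf, hk]) ?_
      intro k hk
      rw [hzapp k]; simp only [hzf, if_neg hk]
      have h2 : |(2:ℝ)⁻¹ ^ k - x₀.1 k| ≤ (2:ℝ)⁻¹ ^ (K+1) := by
        rcases hx₀mem k with h | h
        · rw [h, sub_zero, abs_of_nonneg (by positivity)]
          exact pow_le_pow_of_le_one (by norm_num) (by norm_num) (by omega)
        · rw [h, sub_self, abs_zero]; positivity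
      exact h2
    have hKρ : (2:ℝ)⁻¹ ^ (K+1) < ρ := by
      calc (2:ℝ)⁻¹ ^ (K+1) ≤ (2:ℝ)⁻¹ ^ K :=
            pow_le_pow_of_le_one (by norm_num) (by norm_num) (by omega)
        _ < ρ := hK
    have hydistρ : dist y x₀.1 < ρ := lt_of_le_of_lt hydist hKρ
    have hzdistρ : dist z x₀.1 < ρ := lt_of_le_of_lt hzdist hKρ
    -- y, z as elements of subtype, in the ball
    have hyE : (⟨y, hyS⟩ : SCant) ∈ E N := by
      apply hballE
      rw [Metric.mem_ball, Subtype.dist_eq]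
      exact lt_of_lt_of_le hydistρ (min_le_right _ _)
    have hzE : (⟨z, hzS⟩ : SCant) ∈ E N := by
      apply hballE
      rw [Metric.mem_ball, Subtype.dist_eq]
      exact lt_of_lt_of_le hzdistρ (min_le_right _ _)
    -- values of f
    have hfy : fInd y = 1 := by
      refine if_pos ⟨K + 1, fun k hk => ?_⟩
      rw [hyapp k]; simp only [hyf]; rw [if_neg (by omega)]
    have hfz : fInd z = 0 := by
      refine if_neg ?_
      rintro ⟨M, hM⟩
      have hk : max M (K + 1) ≥ M := le_max_left _ _
      have := hM (max M (K+1)) hk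
      rw [hzapp] at this
      simp only [hzf] at this
      rw [if_neg (by omega)] at this
      exact absurd this (by positivity)
    -- the four estimates
    have e1 : |fInd y - g N y| ≤ 1/5 := hfE ⟨y, hyS⟩ hyE
    have e2 : |fInd z - g N z| ≤ 1/5 := hfE ⟨z, hzS⟩ hzE
    have e3 : |g N y - g N x₀.1| < 1/5 := by
      have := hδc y (lt_of_lt_of_le hydistρ (min_le_left _ _))
      rwa [Real.dist_eq] at this
    have e4 : |g N z - g N x₀.1| < 1/5 := by
      have := hδc z (lt_of_lt_of_le hzdistρ (min_le_left _ _))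
      rwa [Real.dist_eq] at this
    rw [hfy] at e1
    rw [hfz] at e2
    have a1 := abs_sub_abs_le_abs_sub (1 - g N y) 0
    -- derive contradiction by arithmetic
    have b1 : 1 - g N y ≤ 1/5 := le_trans (le_abs_self _) e1
    have b2 : -(1/5) ≤ 0 - g N z := neg_le_of_abs_le e2
    have b3 : g N y - g N x₀.1 ≤ 1/5 := le_of_lt (abs_lt.mp e3).2
    have b4 : -(1/5) ≤ g N z - g N x₀.1 := le_of_lt (neg_lt_of_abs_lt e4)
    linarith
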